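/- For 1 < p < 2 and ε ∈ (0,1], the function h_{p,ε}(x) = (‖x‖² + ε^{2/p})^{p/2} − ε on ℝ^d is twice continuously differentiable, and its Hessian satisfies ‖∇² h_{p,ε}(x)‖_op ≤ C ε^{1−2/p} for ‖x‖ ≤ ε^{1/p} and ‖∇² h_{p,ε}(x)‖_op ≤ C ‖x‖^{p−2} for ‖x‖ > ε^{1/p}, with C a universal constant depending only on p. Consequently ‖h_{p,ε}‖_{C²(B(0,r))} ≤ c₁ ε^{1−2/p} r^p for all r ≥ 1. -/

import Mathlib

open Real

variable {E : Type*} [NormedAddCommGroup E] [InnerProductSpace ℝ E]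

noncomputable def BL : E →L[ℝ] E →L[ℝ] ℝ := innerSL ℝ

@[simp] lemma BL_apply (x y : E) : BL x y = inner ℝ x y := rfl

lemma norm_BL_apply (x : E) : ‖BL x‖ = ‖x‖ := innerSL_apply_norm (𝕜 := ℝ) x

noncomputable def gmap (p a : ℝ) (x : E) : E →L[ℝ] ℝ :=
  (p * (‖x‖ ^ 2 + a) ^ (p / 2 - 1)) • BL x

noncomputable def Gmap (p a : ℝ) (x : E) : E →L[ℝ] E →L[ℝ] ℝ :=
  (p * (‖x‖ ^ 2 + a) ^ (p / 2 - 1)) • BL +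
    ((p * ((p / 2 - 1) * (‖x‖ ^ 2 + a) ^ (p / 2 - 1 - 1))) • (2 • BL x)).smulRight (BL x)

lemma hasFDerivAt_usq (a : ℝ) (x : E) :
    HasFDerivAt (fun y : E => ‖y‖ ^ 2 + a) (2 • BL x) x := by
  simpa [BL] using ((hasStrictFDerivAt_norm_sq x).hasFDerivAt).add_const a

lemma hasFDerivAt_gmap (p a : ℝ) (ha : 0 < a) (x : E) :
    HasFDerivAt (fun y : E => (‖y‖ ^ 2 + a) ^ (p / 2)) (gmap p a x) x := by
  have hux : (0 : ℝ) < ‖x‖ ^ 2 + a := by positivity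
  have h2 : HasDerivAt (fun t : ℝ => t ^ (p / 2))
      (p / 2 * (‖x‖ ^ 2 + a) ^ (p / 2 - 1)) (‖x‖ ^ 2 + a) :=
    Real.hasDerivAt_rpow_const (Or.inl hux.ne')
  have h := h2.comp_hasFDerivAt x (hasFDerivAt_usq a x)
  refine h.congr_fderiv ?_
  ext y
  simp [gmap, smul_smul, two_smul]
  ring

lemma hasFDerivAt_Gmap (p a : ℝ) (ha : 0 < a) (x : E) :
    HasFDerivAt (gmap p a (E := E)) (Gmap p a x) x := by
  have hux : (0 : ℝ) < ‖x‖ ^ 2 + a := by positivity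
  have h2 : HasDerivAt (fun t : ℝ => t ^ (p / 2 - 1))
      ((p / 2 - 1) * (‖x‖ ^ 2 + a) ^ (p / 2 - 1 - 1)) (‖x‖ ^ 2 + a) :=
    Real.hasDerivAt_rpow_const (Or.inl hux.ne')
  have hc : HasFDerivAt (fun y : E => p * (‖y‖ ^ 2 + a) ^ (p / 2 - 1))
      ((p * ((p / 2 - 1) * (‖x‖ ^ 2 + a) ^ (p / 2 - 1 - 1))) • (2 • BL x)) x := by
    have := (h2.comp_hasFDerivAt x (hasFDerivAt_usq a x)).const_mul p
    simpa [smul_smul, mul_assoc] using this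
  have hi : HasFDerivAt (fun y : E => BL y) (BL (E := E)) x := BL.hasFDerivAt
  exact hc.smul hi

set_option maxHeartbeats 1000000 in
set_option synthInstance.maxHeartbeats 400000 in
lemma norm_Gmap_le (p a : ℝ) (hp1 : 1 < p) (hp2 : p < 2) (ha : 0 < a) (x : E) :
    ‖Gmap p a x‖ ≤ 3 * (‖x‖ ^ 2 + a) ^ (p / 2 - 1) := by
  have hux : (0 : ℝ) < ‖x‖ ^ 2 + a := by positivity
  set R : ℝ := (‖x‖ ^ 2 + a) ^ (p / 2 - 1) with hR
  set R2 : ℝ := (‖x‖ ^ 2 + a) ^ (p / 2 - 1 - 1) with hR2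
  have hRpos : 0 < R := Real.rpow_pos_of_pos hux _
  have hR2pos : 0 < R2 := Real.rpow_pos_of_pos hux _
  have hkey : R2 * (‖x‖ ^ 2 + a) = R := by
    rw [hR2, hR, ← Real.rpow_add_one hux.ne' (p / 2 - 1 - 1),
      show p / 2 - 1 - 1 + 1 = p / 2 - 1 by ring]
  have hkey2 : R2 * ‖x‖ ^ 2 ≤ R := by nlinarith
  have hBL : ‖(BL : E →L[ℝ] E →L[ℝ] ℝ)‖ ≤ 1 :=
    ContinuousLinearMap.opNorm_le_bound _ zero_le_one
      (fun y => by rw [norm_BL_apply, one_mul])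
  have h2x : ‖(2 • BL x : E →L[ℝ] ℝ)‖ ≤ 2 * ‖x‖ := by
    rw [two_smul]
    calc ‖BL x + BL x‖ ≤ ‖BL x‖ + ‖BL x‖ := norm_add_le _ _
    _ = 2 * ‖x‖ := by rw [norm_BL_apply]; ring
  have habs : |p * ((p / 2 - 1) * R2)| = p * (1 - p / 2) * R2 := by
    rw [abs_mul, abs_mul, abs_of_pos (by linarith : (0:ℝ) < p),
      abs_of_neg (by linarith : p / 2 - 1 < 0), abs_of_pos hR2pos]
    ring
  have h1 : ‖(p * R) • (BL : E →L[ℝ] E →L[ℝ] ℝ)‖ ≤ p * R := by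
    refine (ContinuousLinearMap.opNorm_smul_le _ _).trans ?_
    rw [Real.norm_eq_abs, abs_of_pos (by positivity : (0:ℝ) < p * R)]
    have := mul_le_mul_of_nonneg_left hBL (by positivity : (0:ℝ) ≤ p * R)
    linarith
  have h2 : ‖((p * ((p / 2 - 1) * R2)) • (2 • BL x : E →L[ℝ] ℝ)).smulRight (BL x)‖ ≤
      p * (1 - p / 2) * R2 * (2 * ‖x‖) * ‖x‖ := by
    rw [ContinuousLinearMap.norm_smulRight_apply, norm_BL_apply]
    refine mul_le_mul_of_nonneg_right ((ContinuousLinearMap.opNorm_smul_le _ _).trans ?_)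
      (norm_nonneg x)
    rw [Real.norm_eq_abs, habs]
    have hnn : (0:ℝ) ≤ p * (1 - p / 2) * R2 :=
      (mul_pos (mul_pos (by linarith : (0:ℝ) < p) (by linarith : (0:ℝ) < 1 - p / 2)) hR2pos).le
    have := mul_le_mul_of_nonneg_left h2x hnn
    nlinarith [norm_nonneg x]
  have hGeq : Gmap p a x = (p * R) • (BL : E →L[ℝ] E →L[ℝ] ℝ) +
      ((p * ((p / 2 - 1) * R2)) • (2 • BL x : E →L[ℝ] ℝ)).smulRight (BL x) := by
    rw [hR, hR2]; rfl
  calc ‖Gmap p a x‖ ≤ ‖(p * R) • (BL : E →L[ℝ] E →L[ℝ] ℝ)‖ +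
      ‖((p * ((p / 2 - 1) * R2)) • (2 • BL x : E →L[ℝ] ℝ)).smulRight (BL x)‖ := by
        rw [hGeq]; exact ContinuousLinearMap.opNorm_add_le _ _
  _ ≤ p * R + p * (1 - p / 2) * R2 * (2 * ‖x‖) * ‖x‖ := add_le_add h1 h2
  _ ≤ 3 * R := by nlinarith [sq_nonneg (p - 1), hkey2,
        mul_le_mul_of_nonneg_left hkey2 (show (0:ℝ) ≤ p * (1 - p / 2) * 2 by nlinarith)]

lemma norm_gmap_le (p a : ℝ) (hp1 : 0 < p) (ha : 0 < a) (x : E) :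
    ‖gmap p a x‖ ≤ p * (‖x‖ ^ 2 + a) ^ (p / 2 - 1) * ‖x‖ := by
  have hux : (0 : ℝ) < ‖x‖ ^ 2 + a := by positivity
  have hc : (0 : ℝ) < p * (‖x‖ ^ 2 + a) ^ (p / 2 - 1) := by
    have := Real.rpow_pos_of_pos hux (p / 2 - 1); positivity
  calc ‖gmap p a x‖ ≤ ‖(p * (‖x‖ ^ 2 + a) ^ (p / 2 - 1) : ℝ)‖ * ‖BL x‖ :=
        ContinuousLinearMap.opNorm_smul_le _ _
  _ = p * (‖x‖ ^ 2 + a) ^ (p / 2 - 1) * ‖x‖ := by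
      rw [norm_BL_apply, Real.norm_eq_abs, abs_of_pos hc]

lemma contDiff_two_f (p a ε : ℝ) (ha : 0 < a) :
    ContDiff ℝ 2 (fun x : E => (‖x‖ ^ 2 + a) ^ (p / 2) - ε) := by
  have h1 : ContDiff ℝ 2 fun x : E => ‖x‖ ^ 2 + a := (contDiff_norm_sq ℝ).add contDiff_const
  exact (h1.rpow_const_of_ne fun x => by positivity).sub contDiff_const

lemma norm_itfd_two (p a ε : ℝ) (ha : 0 < a) (x : E) :
    ‖iteratedFDeriv ℝ 2 (fun y : E => (‖y‖ ^ 2 + a) ^ (p / 2) - ε) x‖ = ‖Gmap p a x‖ := by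
  have hfd : ∀ y : E, HasFDerivAt (fun z : E => (‖z‖ ^ 2 + a) ^ (p / 2) - ε) (gmap p a y) y :=
    fun y => (hasFDerivAt_gmap p a ha y).sub_const ε
  have e1 : fderiv ℝ (fun z : E => (‖z‖ ^ 2 + a) ^ (p / 2) - ε) = gmap p a :=
    funext fun y => (hfd y).fderiv
  have e2 : fderiv ℝ (gmap p a (E := E)) x = Gmap p a x := (hasFDerivAt_Gmap p a ha x).fderiv
  calc ‖iteratedFDeriv ℝ 2 (fun y : E => (‖y‖ ^ 2 + a) ^ (p / 2) - ε) x‖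
      = ‖iteratedFDeriv ℝ 1 (fderiv ℝ (fun y : E => (‖y‖ ^ 2 + a) ^ (p / 2) - ε)) x‖ :=
        (norm_iteratedFDeriv_fderiv (n := 1)).symm
  _ = ‖iteratedFDeriv ℝ 1 (gmap p a (E := E)) x‖ := by rw [e1]
  _ = ‖iteratedFDeriv ℝ 0 (fderiv ℝ (gmap p a (E := E))) x‖ :=
        (norm_iteratedFDeriv_fderiv (n := 0)).symm
  _ = ‖fderiv ℝ (gmap p a (E := E)) x‖ := norm_iteratedFDeriv_zero
  _ = ‖Gmap p a x‖ := by rw [e2]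


set_option maxHeartbeats 1000000 in
/-- Hessian bounds for `h_{p,ε}(x) = (‖x‖² + ε^{2/p})^{p/2} - ε`, `1 < p < 2`:
`h_{p,ε}` is `C²`, `‖∇²h_{p,ε}(x)‖ ≤ C ε^{1-2/p}` for `‖x‖ ≤ ε^{1/p}`,
`‖∇²h_{p,ε}(x)‖ ≤ C ‖x‖^{p-2}` for `‖x‖ > ε^{1/p}`, and consequently
`‖h_{p,ε}‖_{C²(B(0,r))} ≤ c₁ ε^{1-2/p} r^p` for all `r ≥ 1`. Constants depend only on `p`. -/
theorem stmt_16 (p : ℝ) (hp1 : 1 < p) (hp2 : p < 2) :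
    ∃ C > 0, ∃ c₁ > 0, ∀ (d : ℕ) (ε : ℝ), 0 < ε → ε ≤ 1 →
      ContDiff ℝ 2 (fun x : EuclideanSpace ℝ (Fin d) =>
        (‖x‖ ^ 2 + ε ^ (2 / p)) ^ (p / 2) - ε) ∧
      (∀ x : EuclideanSpace ℝ (Fin d), ‖x‖ ≤ ε ^ (1 / p) →
        ‖iteratedFDeriv ℝ 2 (fun x : EuclideanSpace ℝ (Fin d) =>
          (‖x‖ ^ 2 + ε ^ (2 / p)) ^ (p / 2) - ε) x‖ ≤ C * ε ^ (1 - 2 / p)) ∧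
      (∀ x : EuclideanSpace ℝ (Fin d), ε ^ (1 / p) < ‖x‖ →
        ‖iteratedFDeriv ℝ 2 (fun x : EuclideanSpace ℝ (Fin d) =>
          (‖x‖ ^ 2 + ε ^ (2 / p)) ^ (p / 2) - ε) x‖ ≤ C * ‖x‖ ^ (p - 2)) ∧
      (∀ r : ℝ, 1 ≤ r → ∀ x ∈ Metric.closedBall (0 : EuclideanSpace ℝ (Fin d)) r,
        |(‖x‖ ^ 2 + ε ^ (2 / p)) ^ (p / 2) - ε| +
        ‖fderiv ℝ (fun x : EuclideanSpace ℝ (Fin d) =>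
          (‖x‖ ^ 2 + ε ^ (2 / p)) ^ (p / 2) - ε) x‖ +
        ‖iteratedFDeriv ℝ 2 (fun x : EuclideanSpace ℝ (Fin d) =>
          (‖x‖ ^ 2 + ε ^ (2 / p)) ^ (p / 2) - ε) x‖ ≤
          c₁ * ε ^ (1 - 2 / p) * r ^ p) := by
  have hp0 : (0:ℝ) < p := by linarith
  refine ⟨3, by norm_num, p + 5, by linarith, fun d ε hε hε1 => ?_⟩
  set a := ε ^ (2 / p) with haDef
  have ha : 0 < a := Real.rpow_pos_of_pos hε _
  have hexp : a ^ (p / 2 - 1) = ε ^ (1 - 2 / p) := by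
    rw [haDef, ← Real.rpow_mul hε.le]
    congr 1
    field_simp
  have hkeyB : ∀ x : EuclideanSpace ℝ (Fin d),
      ‖iteratedFDeriv ℝ 2 (fun y : EuclideanSpace ℝ (Fin d) => (‖y‖ ^ 2 + a) ^ (p / 2) - ε) x‖
        ≤ 3 * (‖x‖ ^ 2 + a) ^ (p / 2 - 1) := fun x => by
    rw [norm_itfd_two p a ε ha x]; exact norm_Gmap_le p a hp1 hp2 ha x
  have hmono : ∀ x : EuclideanSpace ℝ (Fin d),
      (‖x‖ ^ 2 + a) ^ (p / 2 - 1) ≤ ε ^ (1 - 2 / p) := fun x => by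
    rw [← hexp]
    exact Real.rpow_le_rpow_of_nonpos ha (le_add_of_nonneg_left (by positivity)) (by linarith)
  have hεe : 1 ≤ ε ^ (1 - 2 / p) := by
    apply Real.one_le_rpow_of_pos_of_le_one_of_nonpos hε hε1
    have h2p : 1 < 2 / p := (one_lt_div hp0).2 hp2
    linarith
  have hεnn : (0:ℝ) ≤ ε ^ (1 - 2 / p) := by linarith
  refine ⟨contDiff_two_f p a ε ha, fun x _ => ?_, fun x hx => ?_, fun r hr x hx => ?_⟩
  · exact (hkeyB x).trans (by linarith [hmono x])
  · have hx0 : 0 < ‖x‖ := (Real.rpow_pos_of_pos hε (1 / p)).trans_le hx.le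
    refine (hkeyB x).trans ?_
    have h1 : (‖x‖ ^ 2 + a) ^ (p / 2 - 1) ≤ (‖x‖ ^ 2) ^ (p / 2 - 1) :=
      Real.rpow_le_rpow_of_nonpos (by positivity) (le_add_of_nonneg_right ha.le)
        (by linarith)
    have h2 : ((‖x‖ : ℝ) ^ 2) ^ (p / 2 - 1) = ‖x‖ ^ (p - 2) := by
      rw [← Real.rpow_natCast ‖x‖ 2, ← Real.rpow_mul (norm_nonneg x)]
      congr 1
      push_cast
      ring
    rw [← h2]
    linarith
  · rw [Metric.mem_closedBall, dist_zero_right] at hx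
    have hr0 : (0:ℝ) ≤ r := by linarith
    have hrp1 : 1 ≤ r ^ p := by
      have := Real.rpow_le_rpow_of_exponent_le hr hp0.le
      simpa using this
    have hrr : r ≤ r ^ p := by
      have := Real.rpow_le_rpow_of_exponent_le hr hp1.le
      simpa using this
    have hrpnn : (0:ℝ) ≤ r ^ p := by linarith
    have ha1 : a ≤ 1 := Real.rpow_le_one hε.le hε1 (by positivity)
    have hub : ‖x‖ ^ 2 + a ≤ 2 * r ^ 2 := by
      nlinarith [norm_nonneg x, sq_nonneg r]
    have h3 : ((r:ℝ) ^ 2) ^ (p / 2) = r ^ p := by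
      rw [← Real.rpow_natCast r 2, ← Real.rpow_mul hr0]
      congr 1
      push_cast
      ring
    have hfub : (‖x‖ ^ 2 + a) ^ (p / 2) ≤ 2 * r ^ p := by
      calc (‖x‖ ^ 2 + a) ^ (p / 2) ≤ (2 * r ^ 2) ^ (p / 2) :=
            Real.rpow_le_rpow (by positivity) hub (by linarith)
      _ = 2 ^ (p / 2) * (r ^ 2) ^ (p / 2) := Real.mul_rpow (by norm_num) (by positivity)
      _ ≤ 2 * r ^ p := by
          have h2p : (2:ℝ) ^ (p / 2) ≤ 2 := by
            calc (2:ℝ) ^ (p / 2) ≤ (2:ℝ) ^ (1:ℝ) :=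
                  Real.rpow_le_rpow_of_exponent_le one_le_two (by linarith)
            _ = 2 := Real.rpow_one 2
          rw [h3]
          nlinarith [Real.rpow_nonneg (show (0:ℝ) ≤ 2 by norm_num) (p / 2)]
    have hflb : ε ≤ (‖x‖ ^ 2 + a) ^ (p / 2) := by
      have h1 : a ^ (p / 2) ≤ (‖x‖ ^ 2 + a) ^ (p / 2) :=
        Real.rpow_le_rpow ha.le (le_add_of_nonneg_left (by positivity)) (by linarith)
      have h2 : a ^ (p / 2) = ε := by
        rw [haDef, ← Real.rpow_mul hε.le, show 2 / p * (p / 2) = 1 by field_simp]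
        exact Real.rpow_one ε
      linarith
    have hA : |(‖x‖ ^ 2 + a) ^ (p / 2) - ε| ≤ 2 * (ε ^ (1 - 2 / p) * r ^ p) := by
      rw [abs_of_nonneg (by linarith)]
      nlinarith [mul_le_mul_of_nonneg_right hεe hrpnn]
    have hfd : fderiv ℝ (fun y : EuclideanSpace ℝ (Fin d) => (‖y‖ ^ 2 + a) ^ (p / 2) - ε) x
        = gmap p a x := ((hasFDerivAt_gmap p a ha x).sub_const ε).fderiv
    have hB : ‖fderiv ℝ (fun y : EuclideanSpace ℝ (Fin d) =>
        (‖y‖ ^ 2 + a) ^ (p / 2) - ε) x‖ ≤ p * (ε ^ (1 - 2 / p) * r ^ p) := by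
      rw [hfd]
      refine (norm_gmap_le p a hp0 ha x).trans ?_
      have h1 := hmono x
      have h2 : ‖x‖ ≤ r ^ p := hx.trans hrr
      have hnn : (0:ℝ) ≤ (‖x‖ ^ 2 + a) ^ (p / 2 - 1) := Real.rpow_nonneg (by positivity) _
      have := mul_le_mul h1 h2 (norm_nonneg x) hεnn
      nlinarith
    have hC : ‖iteratedFDeriv ℝ 2 (fun y : EuclideanSpace ℝ (Fin d) =>
        (‖y‖ ^ 2 + a) ^ (p / 2) - ε) x‖ ≤ 3 * (ε ^ (1 - 2 / p) * r ^ p) := by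
      refine (hkeyB x).trans ?_
      have h1 := hmono x
      nlinarith [mul_le_mul_of_nonneg_left hrp1 hεnn]
    calc |(‖x‖ ^ 2 + a) ^ (p / 2) - ε| +
        ‖fderiv ℝ (fun y : EuclideanSpace ℝ (Fin d) => (‖y‖ ^ 2 + a) ^ (p / 2) - ε) x‖ +
        ‖iteratedFDeriv ℝ 2 (fun y : EuclideanSpace ℝ (Fin d) =>
          (‖y‖ ^ 2 + a) ^ (p / 2) - ε) x‖
        ≤ 2 * (ε ^ (1 - 2 / p) * r ^ p) + p * (ε ^ (1 - 2 / p) * r ^ p) +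
          3 * (ε ^ (1 - 2 / p) * r ^ p) := by
          exact add_le_add (add_le_add hA hB) hC
    _ = (p + 5) * ε ^ (1 - 2 / p) * r ^ p := by ring
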